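/- Let 0 < r < 1, let G ⊆ ℂ be a bounded domain with r𝔻 ⊆ G ⊆ 𝔻, let 0 < ε < r²/4, and set G²_ε = { (z₁,z₂) ∈ G² : |z₁ z₂| < ε }. Let x ∈ G be such that (x,x) ∈ G²_ε and |x| > 2ε/r. Then for every a ∈ ℂ such that the linear map z ↦ a(z₁ + z₂) sends G²_ε into 𝔻, one has ρ(0, 2ax) < c_{G²_ε}((0,0), (x,x)). In particular, no map of the form z ↦ a(z₁ + z₂) is extremal for the Carathéodory pseudo-distance between (0,0) and (x,x). -/

import Mathlib

open scoped ENNReal BigOperators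

/-- The inverse hyperbolic tangent, `arctanh t = (1/2) log ((1+t)/(1-t))`. -/
noncomputable def arctanh (t : ℝ) : ℝ := (1 / 2) * Real.log ((1 + t) / (1 - t))

/-- The Poincaré distance on the unit disc:
`ρ(a,b) = arctanh (|a - b| / |1 - conj a * b|)`. -/
noncomputable def rho (a b : ℂ) : ℝ :=
  arctanh (‖a - b‖ / ‖1 - (starRingEnd ℂ) a * b‖)

/-- The open unit disc in `ℂ`. -/
def uDisc : Set ℂ := Metric.ball 0 1

/-- The domain `G^n_ε = { z ∈ Gⁿ : |z₁ ⋯ z_n| < ε }` inside `ℂⁿ`. -/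
def polyDom (n : ℕ) (G : Set ℂ) (ε : ℝ) : Set (Fin n → ℂ) :=
  { z | (∀ i, z i ∈ G) ∧ ‖∏ i, z i‖ < ε }

/-- The Carathéodory pseudo-distance of an open set `M ⊆ ℂⁿ`:
the supremum of `ρ (g x) (g y)` over holomorphic `g : M → 𝔻`. -/
noncomputable def cara {n : ℕ} (M : Set (Fin n → ℂ)) (x y : Fin n → ℂ) : ℝ :=
  sSup { d | ∃ g : (Fin n → ℂ) → ℂ,
    DifferentiableOn ℂ g M ∧ (∀ z ∈ M, g z ∈ uDisc) ∧ d = rho (g x) (g y) }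

/-- The Lempert function of an open set `M ⊆ ℂⁿ`, with values in `[0,∞]`:
the infimum of `ρ(a,b)` over holomorphic discs `f : 𝔻 → M` with `f a = x`, `f b = y`. -/
noncomputable def lempert {n : ℕ} (M : Set (Fin n → ℂ)) (x y : Fin n → ℂ) : ℝ≥0∞ :=
  sInf { d | ∃ (f : ℂ → Fin n → ℂ) (a b : ℂ),
    a ∈ uDisc ∧ b ∈ uDisc ∧ DifferentiableOn ℂ f uDisc ∧
    (∀ z ∈ uDisc, f z ∈ M) ∧ f a = x ∧ f b = y ∧ d = ENNReal.ofReal (rho a b) }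

/-- The `m`-chain Kobayashi distance `k^{(m)}_M(x,y)` of an open set `M ⊆ ℂⁿ`,
with values in `[0,∞]`: the infimum over chains `x = p₀, …, p_m = y` in `M`,
holomorphic discs `fᵢ : 𝔻 → M` and points `aᵢ, bᵢ ∈ 𝔻` with `fᵢ aᵢ = p_{i-1}`,
`fᵢ bᵢ = pᵢ`, of `∑ ρ(aᵢ, bᵢ)`. -/
noncomputable def kChain {n : ℕ} (M : Set (Fin n → ℂ)) (m : ℕ) (x y : Fin n → ℂ) : ℝ≥0∞ :=
  sInf { d | ∃ (p : Fin (m + 1) → Fin n → ℂ) (f : Fin m → ℂ → Fin n → ℂ)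
      (a b : Fin m → ℂ),
    p 0 = x ∧ p (Fin.last m) = y ∧ (∀ i, p i ∈ M) ∧
    (∀ i : Fin m, a i ∈ uDisc ∧ b i ∈ uDisc ∧
      DifferentiableOn ℂ (f i) uDisc ∧ (∀ z ∈ uDisc, f i z ∈ M) ∧
      f i (a i) = p i.castSucc ∧ f i (b i) = p i.succ) ∧
    d = ∑ i : Fin m, ENNReal.ofReal (rho (a i) (b i)) }

/-- The Kobayashi pseudo-distance `k_M = inf_{m ≥ 1} k^{(m)}_M`. -/
noncomputable def kobayashi {n : ℕ} (M : Set (Fin n → ℂ)) (x y : Fin n → ℂ) : ℝ≥0∞ :=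
  ⨅ m : ℕ, kChain M (m + 1) x y

/-- The point `X = (x, …, x, 0) ∈ ℂⁿ`. -/
def Xpt (n : ℕ) (x : ℂ) : Fin n → ℂ := fun i => if (i : ℕ) < n - 1 then x else 0

/-- The point `Y = (0, y, …, y) ∈ ℂⁿ`. -/
def Ypt (n : ℕ) (y : ℂ) : Fin n → ℂ := fun i => if (i : ℕ) = 0 then 0 else y

lemma arctanh_lt_arctanh {s t : ℝ} (hs : 0 ≤ s) (hst : s < t) (ht : t < 1) :
    arctanh s < arctanh t := by
  unfold arctanh
  have h1s : 0 < 1 - s := by linarith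
  have h1t : 0 < 1 - t := by linarith
  have hA : 0 < (1 + s) / (1 - s) := by positivity
  have hAB : (1 + s) / (1 - s) < (1 + t) / (1 - t) := by
    rw [div_lt_div_iff₀ h1s h1t]; nlinarith
  have := Real.log_lt_log hA hAB
  linarith

lemma arctanh_le_arctanh {s t : ℝ} (hs : 0 ≤ s) (hst : s ≤ t) (ht : t < 1) :
    arctanh s ≤ arctanh t := by
  rcases eq_or_lt_of_le hst with h | h
  · rw [h]
  · exact (arctanh_lt_arctanh hs h ht).le

lemma mobius_lt {a b : ℂ} (ha : ‖a‖ < 1) (hb : ‖b‖ < 1) :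
    ‖a - b‖ < ‖1 - (starRingEnd ℂ) a * b‖ := by
  rw [Complex.norm_def, Complex.norm_def]
  apply Real.sqrt_lt_sqrt (Complex.normSq_nonneg _)
  have ha' : Complex.normSq a < 1 := by
    have := Complex.sq_norm a; nlinarith [norm_nonneg a]
  have hb' : Complex.normSq b < 1 := by
    have := Complex.sq_norm b; nlinarith [norm_nonneg b]
  simp only [Complex.normSq_apply, Complex.sub_re, Complex.sub_im, Complex.one_re,
    Complex.one_im, Complex.mul_re, Complex.mul_im, Complex.conj_re, Complex.conj_im] at *
  nlinarith [mul_pos (by linarith : (0:ℝ) < 1 - (a.re*a.re + a.im*a.im))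
    (by linarith : (0:ℝ) < 1 - (b.re*b.re + b.im*b.im))]

lemma schwarz_pick {h : ℂ → ℂ} (hd : DifferentiableOn ℂ h (Metric.ball 0 1))
    (hm : ∀ z ∈ Metric.ball (0:ℂ) 1, h z ∈ Metric.ball (0:ℂ) 1)
    {c : ℂ} (hc : c ∈ Metric.ball (0:ℂ) 1) :
    ‖h 0 - h c‖ / ‖1 - (starRingEnd ℂ) (h 0) * h c‖
      ≤ ‖c‖ := by
  have h0mem : (0:ℂ) ∈ Metric.ball (0:ℂ) 1 := by simp
  have habs : ∀ z ∈ Metric.ball (0:ℂ) 1, ‖h z‖ < 1 := by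
    intro z hz
    have := hm z hz
    simpa [Complex.dist_eq] using this
  have hαlt : ‖h 0‖ < 1 := habs 0 h0mem
  set F : ℂ → ℂ := fun w => (h w - h 0) / (1 - (starRingEnd ℂ) (h 0) * h w) with hF
  have hden : ∀ z ∈ Metric.ball (0:ℂ) 1, (1 - (starRingEnd ℂ) (h 0) * h z) ≠ 0 := by
    intro z hz
    have hz' := habs z hz
    have hlt := mobius_lt hαlt hz'
    intro heq
    rw [heq] at hlt
    simp at hlt
    nlinarith [norm_nonneg (h 0 - h z)]
  have hFd : DifferentiableOn ℂ F (Metric.ball 0 1) := by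
    apply DifferentiableOn.div
    · exact hd.sub (differentiableOn_const _)
    · exact (differentiableOn_const _).sub ((differentiableOn_const _).mul hd)
    · exact hden
  have hFm : Set.MapsTo F (Metric.ball 0 1) (Metric.ball 0 1) := by
    intro z hz
    have hz' := habs z hz
    have hlt := mobius_lt hαlt hz'
    have hpos : 0 < ‖1 - (starRingEnd ℂ) (h 0) * h z‖ :=
      (norm_nonneg _).trans_lt hlt
    simp only [Metric.mem_ball, Complex.dist_eq, sub_zero, hF]
    rw [norm_div, div_lt_one hpos]
    rwa [norm_sub_rev]
  have hF0 : F 0 = 0 := by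
    simp only [hF, sub_self, zero_div]
  have hcball : ‖c‖ < 1 := by simpa [Complex.dist_eq] using hc
  have := Complex.norm_le_norm_of_mapsTo_ball hFd (hFm.mono_right Metric.ball_subset_closedBall) hF0 hcball
  rw [hF] at this
  simp only at this
  rw [norm_div] at this
  rwa [norm_sub_rev (h 0) (h c)]

lemma rho_zero (w : ℂ) : rho 0 w = arctanh (‖w‖) := by
  simp [rho]


/-- no map of the form `z ↦ a(z₁ + z₂)` sending `G²_ε` into `𝔻`
is extremal for the Carathéodory pseudo-distance between `(0,0)` and `(x,x)`:
one always has `ρ(0, 2ax) < c_{G²_ε}((0,0),(x,x))`. -/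
theorem linear_not_extremal (r : ℝ) (hr0 : 0 < r) (hr1 : r < 1)
    (G : Set ℂ) (hGopen : IsOpen G) (hGconn : IsConnected G)
    (hGbdd : Bornology.IsBounded G)
    (hrG : Metric.ball (0 : ℂ) r ⊆ G) (hG1 : G ⊆ Metric.ball (0 : ℂ) 1)
    (ε : ℝ) (hε0 : 0 < ε) (hε : ε < r ^ 2 / 4)
    (x : ℂ) (hxG : x ∈ G) (hmem : (fun _ : Fin 2 => x) ∈ polyDom 2 G ε)
    (hxr : 2 * ε / r < ‖x‖) :
    ∀ a : ℂ, (∀ z ∈ polyDom 2 G ε, a * (z 0 + z 1) ∈ uDisc) →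
      rho 0 (2 * a * x) < cara (polyDom 2 G ε) 0 (fun _ => x) := by
  intro a ha
  -- basic facts
  have hx2 : ‖x‖ * ‖x‖ < ε := by
    have h2 := hmem.2
    rwa [Fin.prod_univ_two, norm_mul] at h2
  have hxpos : 0 < ‖x‖ := lt_trans (by positivity) hxr
  have hsε : 0 < Real.sqrt ε := Real.sqrt_pos.2 hε0
  have hεr : Real.sqrt ε < r := by
    rw [show r = Real.sqrt (r ^ 2) by rw [Real.sqrt_sq hr0.le]]
    exact Real.sqrt_lt_sqrt hε0.le (by nlinarith)
  have hxε : ‖x‖ < Real.sqrt ε := by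
    nlinarith [Real.sq_sqrt hε0.le, Real.sqrt_nonneg ε]
  -- the bound |a| ≤ 1/r
  have hra : r * ‖a‖ ≤ 1 := by
    by_contra hcon
    push_neg at hcon
    have hapos : 0 < ‖a‖ := by
      rcases eq_or_lt_of_le (norm_nonneg a) with h | h
      · rw [← h] at hcon; simp at hcon; linarith
      · exact h
    have h1a : 1 / ‖a‖ < r := by
      rw [div_lt_iff₀ hapos]; nlinarith
    obtain ⟨t, ht1, ht2⟩ := exists_between h1a
    have htpos : 0 < t := lt_trans (by positivity) ht1
    set z : Fin 2 → ℂ := fun i => if i = 0 then (t : ℂ) else 0 with hzdef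
    have hz0 : z 0 = (t : ℂ) := by simp [hzdef]
    have hz1 : z 1 = 0 := by simp [hzdef]
    have hz : z ∈ polyDom 2 G ε := by
      constructor
      · intro i
        fin_cases i
        · apply hrG
          simp only [Metric.mem_ball, Complex.dist_eq, sub_zero]
          rw [show z ⟨0, by norm_num⟩ = (t : ℂ) from hz0, Complex.norm_real, Real.norm_eq_abs,
            abs_of_pos htpos]
          exact ht2
        · apply hrG
          rw [show z ⟨1, by norm_num⟩ = 0 from hz1]
          simp [hr0]
      · rw [Fin.prod_univ_two, hz0, hz1]
        simpa using hε0
    have h3 := ha _ hz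
    rw [hz0, hz1, add_zero] at h3
    simp only [uDisc, Metric.mem_ball, Complex.dist_eq, sub_zero] at h3
    rw [norm_mul, Complex.norm_real, Real.norm_eq_abs, abs_of_pos htpos] at h3
    have : 1 < ‖a‖ * t := by
      rw [div_lt_iff₀ hapos] at ht1; nlinarith
    linarith
  -- the competitor function g(z) = z₁ z₂ / ε
  set g : (Fin 2 → ℂ) → ℂ := fun z => z 0 * z 1 / (ε : ℂ) with hg
  have hproj : ∀ i : Fin 2, Differentiable ℂ (fun z : Fin 2 → ℂ => z i) := fun i =>
    (ContinuousLinearMap.proj i : (Fin 2 → ℂ) →L[ℂ] ℂ).differentiable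
  have hgdiff : Differentiable ℂ g := by
    rw [hg]
    have : (fun z : Fin 2 → ℂ => z 0 * z 1 / (ε : ℂ))
        = fun z : Fin 2 → ℂ => z 0 * z 1 * ((ε : ℂ))⁻¹ := by
      funext z; rw [div_eq_mul_inv]
    rw [this]
    exact ((hproj 0).mul (hproj 1)).mul_const _
  have hgmaps : ∀ z ∈ polyDom 2 G ε, g z ∈ uDisc := by
    intro z hz
    have h2 := hz.2
    rw [Fin.prod_univ_two] at h2
    simp only [uDisc, Metric.mem_ball, Complex.dist_eq, sub_zero, hg]
    rw [norm_div, Complex.norm_real, Real.norm_eq_abs, abs_of_pos hε0, div_lt_one hε0]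
    exact h2
  -- membership of ρ(0, x²/ε) in the defining set of cara
  have hmemS : rho 0 (x * x / (ε : ℂ)) ∈
      { d | ∃ g : (Fin 2 → ℂ) → ℂ, DifferentiableOn ℂ g (polyDom 2 G ε) ∧
        (∀ z ∈ polyDom 2 G ε, g z ∈ uDisc) ∧
        d = rho (g 0) (g (fun _ => x)) } := by
    refine ⟨g, hgdiff.differentiableOn, hgmaps, ?_⟩
    have h0 : g 0 = 0 := by simp [hg]
    rw [h0]
  -- the set is bounded above by arctanh (|x| / √ε)
  have hbdd : BddAbove { d | ∃ g : (Fin 2 → ℂ) → ℂ, DifferentiableOn ℂ g (polyDom 2 G ε) ∧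
      (∀ z ∈ polyDom 2 G ε, g z ∈ uDisc) ∧
      d = rho (g 0) (g (fun _ => x)) } := by
    refine ⟨arctanh (‖x‖ / Real.sqrt ε), ?_⟩
    rintro d ⟨f, hfd, hfm, rfl⟩
    set c : ℂ := x / (Real.sqrt ε : ℂ) with hc
    have habsc : ‖c‖ = ‖x‖ / Real.sqrt ε := by
      rw [hc, norm_div, Complex.norm_real, Real.norm_eq_abs, abs_of_pos hsε]
    have hcball : c ∈ Metric.ball (0 : ℂ) 1 := by
      simp only [Metric.mem_ball, Complex.dist_eq, sub_zero]
      rw [habsc, div_lt_one hsε]; exact hxε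
    set u : ℂ → Fin 2 → ℂ := fun w => fun _ => (Real.sqrt ε : ℂ) * w with hu
    have hdiag : Differentiable ℂ (fun z : ℂ => (fun _ : Fin 2 => z)) :=
      (ContinuousLinearMap.pi fun _ : Fin 2 => ContinuousLinearMap.id ℂ ℂ).differentiable
    have hmul : Differentiable ℂ (fun w : ℂ => (Real.sqrt ε : ℂ) * w) :=
      differentiable_id.const_mul _
    have hud : Differentiable ℂ u := by
      rw [hu]
      exact hdiag.comp hmul
    have humaps : ∀ w ∈ Metric.ball (0 : ℂ) 1, u w ∈ polyDom 2 G ε := by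
      intro w hw
      have hw' : ‖w‖ < 1 := by simpa [Complex.dist_eq] using hw
      have habsuw : ‖(Real.sqrt ε : ℂ) * w‖ = Real.sqrt ε * ‖w‖ := by
        rw [norm_mul, Complex.norm_real, Real.norm_eq_abs, abs_of_pos hsε]
      constructor
      · intro i
        apply hrG
        simp only [Metric.mem_ball, Complex.dist_eq, sub_zero, hu]
        rw [habsuw]
        nlinarith [norm_nonneg w]
      · rw [Fin.prod_univ_two]
        simp only [hu]
        rw [norm_mul, habsuw]
        have h1 : ‖w‖ * ‖w‖ < 1 := by
          nlinarith [norm_nonneg w]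
        have h2 : Real.sqrt ε * Real.sqrt ε = ε := Real.mul_self_sqrt hε0.le
        nlinarith [mul_pos hsε hsε, norm_nonneg w,
          mul_nonneg (norm_nonneg w) (norm_nonneg w)]
    set h : ℂ → ℂ := fun w => f (u w) with hh
    have hhd : DifferentiableOn ℂ h (Metric.ball 0 1) :=
      hfd.comp hud.differentiableOn humaps
    have hhm : ∀ w ∈ Metric.ball (0:ℂ) 1, h w ∈ Metric.ball (0:ℂ) 1 := by
      intro w hw
      have := hfm _ (humaps w hw)
      simpa [uDisc] using this
    have hsp := schwarz_pick hhd hhm hcball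
    have h0 : h 0 = f 0 := by
      have : u 0 = (0 : Fin 2 → ℂ) := by funext i; simp [hu]
      rw [hh]; simp only; rw [this]
    have hcx : h c = f (fun _ => x) := by
      have huc : u c = fun _ : Fin 2 => x := by
        funext i
        rw [hu]; simp only [hc]
        rw [mul_div_cancel₀]
        exact Complex.ofReal_ne_zero.2 (ne_of_gt hsε)
      rw [hh]; simp only; rw [huc]
    rw [h0, hcx] at hsp
    rw [rho]
    apply arctanh_le_arctanh (div_nonneg (norm_nonneg _) (norm_nonneg _))
    · rwa [← habsc]
    · rw [div_lt_one hsε]; exact hxε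
  -- conclude
  have hle := le_csSup hbdd hmemS
  have hkey : rho 0 (2 * a * x) < rho 0 (x * x / (ε : ℂ)) := by
    rw [rho_zero, rho_zero]
    have habs1 : ‖x * x / (ε : ℂ)‖ = ‖x‖ * ‖x‖ / ε := by
      rw [norm_div, norm_mul, Complex.norm_real, Real.norm_eq_abs, abs_of_pos hε0]
    rw [habs1, norm_mul, norm_mul]
    apply arctanh_lt_arctanh
    · positivity
    · simp only [Complex.norm_two]
      rw [lt_div_iff₀ hε0]
      have h2ε : 2 * ε < r * ‖x‖ := by
        rw [div_lt_iff₀ hr0] at hxr; linarith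
      nlinarith [norm_nonneg a, norm_nonneg x, mul_pos hε0 hxpos]
    · rw [div_lt_one hε0]; exact hx2
  calc rho 0 (2 * a * x) < rho 0 (x * x / (ε : ℂ)) := hkey
    _ ≤ _ := hle
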